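/- Let f : ℝ → ℝ be four times continuously differentiable on a neighborhood of 0. Then, as h → 0, [f(h/2) + (h/8)(f′(0) − f′(h))] − [f(0) + (h/2)f′(0) − (h³/24)f′′′(0)] = O(h⁴). -/

import Mathlib

open Asymptotics Finset


lemma poly_hasDerivAt (a : ℕ → ℝ) (n : ℕ) (t : ℝ) :
    HasDerivAt (fun x : ℝ => ∑ k ∈ Finset.range (n+1), x ^ k / (Nat.factorial k) * a k)
      (∑ k ∈ Finset.range n, t ^ k / (Nat.factorial k) * a (k+1)) t := by
  have h : ∀ k ∈ Finset.range (n+1), HasDerivAt (fun x : ℝ => x ^ k / (Nat.factorial k) * a k)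
      ((k : ℝ) * t ^ (k-1) / (Nat.factorial k) * a k) t := fun k _ =>
    ((hasDerivAt_pow k t).div_const _).mul_const (a k)
  have hsum := HasDerivAt.fun_sum h
  have heq : ∑ k ∈ Finset.range (n+1), (k : ℝ) * t ^ (k-1) / (Nat.factorial k) * a k
      = ∑ k ∈ Finset.range n, t ^ k / (Nat.factorial k) * a (k+1) := by
    rw [Finset.sum_range_succ']
    simp only [Nat.cast_zero, zero_mul, Nat.factorial_zero, Nat.cast_one, zero_div, add_zero]
    refine Finset.sum_congr rfl fun k _ => ?_
    have hf : (Nat.factorial k : ℝ) ≠ 0 := Nat.cast_ne_zero.mpr k.factorial_ne_zero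
    simp only [Nat.add_sub_cancel, Nat.factorial_succ, Nat.cast_mul, Nat.cast_add, Nat.cast_one]
    field_simp
  rwa [heq] at hsum

lemma taylor_peano : ∀ (n : ℕ) (f : ℝ → ℝ) (s : Set ℝ), s ∈ nhds (0:ℝ) →
    ContDiffOn ℝ (n+1) f s →
    (fun h : ℝ => f h - ∑ k ∈ Finset.range (n+1), h ^ k / (Nat.factorial k) * iteratedDeriv k f 0)
      =O[nhds 0] fun h : ℝ => h ^ (n+1) := by
  intro n
  induction n with
  | zero =>
    intro f s hs hf
    have hd : DifferentiableAt ℝ f 0 := by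
      have := (hf.contDiffAt hs).differentiableAt (by simp)
      exact this
    have := hd.hasDerivAt.hasFDerivAt.isBigO_sub
    simpa using this
  | succ n IH =>
    intro f s hs hf
    set u := interior s with hu_def
    have hu : IsOpen u := isOpen_interior
    have h0u : (0:ℝ) ∈ u := mem_interior_iff_mem_nhds.mpr hs
    have hun : u ∈ nhds (0:ℝ) := hu.mem_nhds h0u
    have hfu : ContDiffOn ℝ (↑(n+1) + 1) f u := hf.mono interior_subset
    obtain ⟨hdiff, -, hderiv⟩ := (contDiffOn_succ_iff_deriv_of_isOpen hu).mp hfu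
    have hderiv' : ContDiffOn ℝ ((n:WithTop ℕ∞) + 1) (deriv f) u := by
      exact_mod_cast hderiv
    have IHd := IH (deriv f) u hun hderiv'
    -- rewrite iterated derivs of deriv f
    have hshift : ∀ k : ℕ, iteratedDeriv k (deriv f) 0 = iteratedDeriv (k+1) f 0 := by
      intro k; rw [iteratedDeriv_succ']
    obtain ⟨C, hC0, hCb⟩ := IHd.exists_nonneg
    rw [isBigOWith_iff] at hCb
    obtain ⟨r₁, hr₁, hball⟩ := Metric.eventually_nhds_iff.mp hCb
    obtain ⟨r₂, hr₂, hball2⟩ := Metric.mem_nhds_iff.mp hun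
    set r := min r₁ r₂ with hr_def
    have hr : 0 < r := lt_min hr₁ hr₂
    set a : ℕ → ℝ := fun k => iteratedDeriv k f 0 with ha
    set R : ℝ → ℝ := fun h => f h - ∑ k ∈ Finset.range (n+2), h ^ k / (Nat.factorial k) * a k
      with hR
    have hR0 : R 0 = 0 := by
      simp only [hR]
      rw [Finset.sum_eq_single 0]
      · simp [ha]
      · intro k _ hk; simp [zero_pow hk]
      · simp
    have hRd : ∀ t ∈ Metric.ball (0:ℝ) r, HasDerivAt R
        (deriv f t - ∑ k ∈ Finset.range (n+1), t ^ k / (Nat.factorial k) * a (k+1)) t := by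
      intro t ht
      have htu : t ∈ u := hball2 (Metric.ball_subset_ball (min_le_right _ _) ht)
      have hft : DifferentiableAt ℝ f t := (hdiff t htu).differentiableAt (hu.mem_nhds htu)
      exact hft.hasDerivAt.sub (poly_hasDerivAt a (n+1) t)
    -- main estimate
    rw [isBigO_iff]
    refine ⟨C, Metric.eventually_nhds_iff.mpr ⟨r, hr, fun {h} hh => ?_⟩⟩
    rw [dist_zero_right] at hh
    have hseg : segment ℝ 0 h ⊆ Metric.ball (0:ℝ) r := by
      apply (convex_ball (0:ℝ) r).segment_subset (Metric.mem_ball_self hr)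
      rwa [Metric.mem_ball, dist_zero_right]
    have habs : ∀ t ∈ segment ℝ 0 h, |t| ≤ |h| := by
      intro t ht
      rw [segment_eq_uIcc] at ht
      rcases ht with ⟨h1, h2⟩
      exact abs_le.mpr ⟨le_trans (le_inf (neg_nonpos_of_nonneg (abs_nonneg h)) (neg_abs_le h)) h1,
        le_trans h2 (sup_le (abs_nonneg h) (le_abs_self h))⟩
    have key : ‖R h - R 0‖ ≤ C * |h|^(n+1) * ‖h - 0‖ := by
      apply Convex.norm_image_sub_le_of_norm_hasDerivWithin_le
        (f' := fun t => deriv f t - ∑ k ∈ Finset.range (n+1), t ^ k / (Nat.factorial k) * a (k+1))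
        (fun t ht => ((hRd t (hseg ht)).hasDerivWithinAt))
        (fun t ht => ?_) (convex_segment 0 h) (left_mem_segment ℝ 0 h) (right_mem_segment ℝ 0 h)
      have hb := hball (show dist t 0 < r₁ by
        have := hseg ht; rw [Metric.mem_ball] at this
        exact lt_of_lt_of_le this (min_le_left _ _))
      simp only [hshift] at hb
      calc ‖deriv f t - ∑ k ∈ Finset.range (n+1), t ^ k / (Nat.factorial k) * a (k+1)‖
          ≤ C * ‖t ^ (n+1)‖ := hb
        _ ≤ C * |h|^(n+1) := by
            rw [norm_pow, Real.norm_eq_abs]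
            exact mul_le_mul_of_nonneg_left (pow_le_pow_left₀ (abs_nonneg t) (habs t ht) _) hC0
    rw [hR0, sub_zero] at key
    calc ‖R h‖ ≤ C * |h|^(n+1) * ‖h - 0‖ := key
      _ = C * ‖h ^ (n+1+1)‖ := by
          rw [sub_zero, Real.norm_eq_abs, Real.norm_eq_abs, abs_pow]; ring

/-- For `f` four times continuously differentiable on a neighborhood of 0, the
flux-correction form (with `C = 1/4`) satisfies
`f(h/2) + (h/8)(f′(0) − f′(h)) = f(0) + (h/2)f′(0) − (h³/24)f′′′(0) + O(h⁴)` as `h → 0`. -/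
theorem stmt_9 (f : ℝ → ℝ) (s : Set ℝ) (hs : s ∈ nhds (0 : ℝ))
    (hf : ContDiffOn ℝ 4 f s) :
    (fun h : ℝ =>
        (f (h/2) + (h/8) * (deriv f 0 - deriv f h))
          - (f 0 + (h/2) * deriv f 0 - (h^3/24) * deriv^[3] f 0))
      =O[nhds 0] fun h : ℝ => h^4 := by
  have hf4 : ContDiffOn ℝ ((3:ℕ)+1) f s := by exact_mod_cast hf
  have hA := taylor_peano 3 f s hs hf4
  have htend : Filter.Tendsto (fun h : ℝ => h/2) (nhds 0) (nhds 0) := by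
    simpa using (continuous_id.div_const (2:ℝ)).tendsto (0:ℝ)
  have hA2 := hA.comp_tendsto htend
  have hhalf : (fun h : ℝ => (h/2)^(3+1)) = fun h : ℝ => (1/16) * h^4 := by
    funext h; ring
  have hA3 : (fun h : ℝ => f (h/2)
      - ∑ k ∈ Finset.range 4, (h/2) ^ k / (Nat.factorial k) * iteratedDeriv k f 0)
      =O[nhds 0] fun h : ℝ => h^4 := by
    refine hA2.trans ?_
    rw [show ((fun h : ℝ => h ^ (3+1)) ∘ fun h : ℝ => h/2) = fun h : ℝ => (h/2)^(3+1) from rfl, hhalf]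
    exact (isBigO_refl (fun h : ℝ => h^4) _).const_mul_left _
  -- derivative part
  have h0u : (0:ℝ) ∈ interior s := mem_interior_iff_mem_nhds.mpr hs
  have hun : interior s ∈ nhds (0:ℝ) := isOpen_interior.mem_nhds h0u
  have hfu : ContDiffOn ℝ ((3:WithTop ℕ∞) + 1) f (interior s) := by
    have : ((3:WithTop ℕ∞) + 1) = 4 := by norm_num
    rw [this]; exact hf.mono interior_subset
  obtain ⟨-, -, hderiv⟩ := (contDiffOn_succ_iff_deriv_of_isOpen isOpen_interior).mp hfu
  have hderiv' : ContDiffOn ℝ ((2:ℕ)+1) (deriv f) (interior s) := by exact_mod_cast hderiv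
  have hB := taylor_peano 2 (deriv f) (interior s) hun hderiv'
  have hB2 := (isBigO_refl (fun h : ℝ => h/8) (nhds 0)).mul hB
  have hB3 : (fun h : ℝ => (h/8) * (deriv f h
      - ∑ k ∈ Finset.range 3, h ^ k / (Nat.factorial k) * iteratedDeriv k (deriv f) 0))
      =O[nhds 0] fun h : ℝ => h^4 := by
    refine hB2.trans ?_
    rw [show (fun h : ℝ => h/8 * h^(2+1)) = fun h : ℝ => (1/8) * h^4 from by funext h; ring]
    exact (isBigO_refl (fun h : ℝ => h^4) _).const_mul_left _
  refine (hA3.sub hB3).congr_left fun h => ?_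
  simp only [Finset.sum_range_succ, Finset.sum_range_zero, ← iteratedDeriv_succ',
    ← iteratedDeriv_eq_iterate, iteratedDeriv_zero, iteratedDeriv_one]
  norm_num [Nat.factorial]
  ring
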